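/- Among all n-vertex graphs with independence number at most r, the complement Turán graph \overline{T(n,r)} has the minimum number of edges. -/

import Mathlib

open Finset

open SimpleGraph in
lemma aux_compl_card {n : ℕ} (G : SimpleGraph (Fin n)) [DecidableRel G.Adj] :
    G.edgeFinset.card + Gᶜ.edgeFinset.card = n.choose 2 := by
  classical
  have hdisj : Disjoint G.edgeFinset Gᶜ.edgeFinset := by
    rw [Finset.disjoint_left]
    intro e he he'
    rw [mem_edgeFinset] at he he'
    have : e ∈ (G ⊓ Gᶜ).edgeSet := by rw [edgeSet_inf]; exact ⟨he, he'⟩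
    simp at this
  have hunion : G.edgeFinset ∪ Gᶜ.edgeFinset = (⊤ : SimpleGraph (Fin n)).edgeFinset := by
    ext e
    induction e with
    | _ a b =>
      simp only [Finset.mem_union, mem_edgeFinset, mem_edgeSet, compl_adj, top_adj]
      constructor
      · rintro (h | ⟨h, _⟩)
        · exact h.ne
        · exact h
      · intro h
        by_cases hab : G.Adj a b
        · exact Or.inl hab
        · exact Or.inr ⟨h, hab⟩
  rw [← card_union_of_disjoint hdisj, hunion, card_edgeFinset_top_eq_card_choose_two,
    Fintype.card_fin]

lemma aux_class_card {n r : ℕ} (hr : 0 < r) (i : ℕ) (hi : i < r) :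
    #((Finset.range n).filter (fun x => x % r = i)) =
      n / r + if i < n % r then 1 else 0 := by
  have h := Nat.count_modEq_card n hr i
  rw [Nat.count_eq_card_filter_range] at h
  rw [Nat.mod_eq_of_lt hi] at h
  rw [← h]
  congr 1
  ext x
  rw [Finset.mem_filter, Finset.mem_filter]
  exact and_congr_right fun _ => by unfold Nat.ModEq; rw [Nat.mod_eq_of_lt hi]

open SimpleGraph in
lemma aux_degree {n r : ℕ} (hr : 0 < r) (v : Fin n) :
    ((turanGraph n r)ᶜ).degree v =
      (n / r + if v.val % r < n % r then 1 else 0) - 1 := by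
  classical
  have hclass : #((univ : Finset (Fin n)).filter (fun w => w.val % r = v.val % r)) =
      #((Finset.range n).filter (fun x => x % r = v.val % r)) := by
    apply Finset.card_bij (fun a _ => a.val)
    · intro a ha
      simp only [Finset.mem_filter, Finset.mem_univ, true_and] at ha
      simp [ha, a.isLt]
    · intro a _ b _ h
      exact Fin.val_injective h
    · intro b hb
      simp only [Finset.mem_filter, Finset.mem_range] at hb
      exact ⟨⟨b, hb.1⟩, by simp [hb.2], rfl⟩
  have hnb : ((turanGraph n r)ᶜ).neighborFinset v =
      ((univ : Finset (Fin n)).filter (fun w => w.val % r = v.val % r)).erase v := by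
    ext w
    simp only [mem_neighborFinset, compl_adj, Finset.mem_erase, Finset.mem_filter,
      Finset.mem_univ, true_and, turanGraph_adj, not_not]
    constructor
    · rintro ⟨h1, h2⟩
      exact ⟨fun h => h1 h.symm, by simpa using h2.symm⟩
    · rintro ⟨h1, h2⟩
      exact ⟨fun h => h1 h.symm, by simpa using h2.symm⟩
  rw [← card_neighborFinset_eq_degree, hnb, Finset.card_erase_of_mem (by simp),
    hclass, aux_class_card hr _ (Nat.mod_lt _ hr)]

/-- `M n r`: the number of edges of the complement Turán graph `T̄(n,r)`. -/
def M (n r : ℕ) : ℕ :=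
  (n % r) * ((n / r + 1) * (n / r) / 2) + (r - n % r) * ((n / r) * (n / r - 1) / 2)

open SimpleGraph in
lemma aux_turan_compl_card {n r : ℕ} (hr : 0 < r) :
    #((turanGraph n r)ᶜ).edgeFinset = M n r := by
  classical
  set q := n / r with hq
  set s := n % r with hs
  have hsum : ∑ v : Fin n, ((turanGraph n r)ᶜ).degree v = 2 * M n r := by
    have h1 : ∑ v : Fin n, ((turanGraph n r)ᶜ).degree v =
        ∑ x ∈ Finset.range n, ((q + if x % r < s then 1 else 0) - 1) := by
      rw [← Fin.sum_univ_eq_sum_range (fun x => (q + if x % r < s then 1 else 0) - 1) n]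
      exact Finset.sum_congr rfl fun v _ => aux_degree hr v
    have h2 : ∑ x ∈ Finset.range n, ((q + if x % r < s then 1 else 0) - 1) =
        ∑ i ∈ Finset.range r, ((q + if i < s then 1 else 0) *
          ((q + if i < s then 1 else 0) - 1)) := by
      rw [← Finset.sum_fiberwise_of_maps_to (g := fun x => x % r)
        (fun x _ => Finset.mem_range.mpr (Nat.mod_lt _ hr))]
      refine Finset.sum_congr rfl fun i hi => ?_
      have : ∀ x ∈ (Finset.range n).filter (fun y => y % r = i),
          (q + if x % r < s then 1 else 0) - 1 = (q + if i < s then 1 else 0) - 1 := by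
        intro x hx
        simp only [Finset.mem_filter] at hx
        rw [hx.2]
      rw [Finset.sum_congr rfl this, Finset.sum_const, smul_eq_mul,
        aux_class_card hr i (Finset.mem_range.mp hi)]
    have h3 : ∑ i ∈ Finset.range r, ((q + if i < s then 1 else 0) *
          ((q + if i < s then 1 else 0) - 1)) =
        s * ((q + 1) * q) + (r - s) * (q * (q - 1)) := by
      have hsr : s ≤ r := (Nat.mod_lt _ hr).le
      rw [Finset.range_eq_Ico, ← Finset.sum_Ico_consecutive _ (Nat.zero_le s) hsr]
      congr 1
      · rw [Finset.sum_congr rfl (fun i hi => ?_), Finset.sum_const, smul_eq_mul,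
          Nat.card_Ico, Nat.sub_zero]
        simp only [Finset.mem_Ico] at hi
        rw [if_pos hi.2]
        simp
      · rw [Finset.sum_congr rfl (fun i hi => ?_), Finset.sum_const, smul_eq_mul,
          Nat.card_Ico]
        simp only [Finset.mem_Ico] at hi
        rw [if_neg (by omega)]
        simp
    have he1 : 2 * ((q + 1) * q / 2) = (q + 1) * q := by
      refine Nat.two_mul_div_two_of_even ?_
      rw [mul_comm]; exact Nat.even_mul_succ_self q
    have he2 : 2 * (q * (q - 1) / 2) = q * (q - 1) := by
      refine Nat.two_mul_div_two_of_even ?_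
      rcases q with _ | q
      · simp
      · simpa [mul_comm] using Nat.even_mul_succ_self q
    rw [h1, h2, h3, M, ← hq, ← hs, Nat.mul_add,
      mul_left_comm 2 s ((q + 1) * q / 2), he1,
      mul_left_comm 2 (r - s) (q * (q - 1) / 2), he2]
  have := SimpleGraph.sum_degrees_eq_twice_card_edges ((turanGraph n r)ᶜ)
  omega

/-- among all `n`-vertex graphs with independence number at most `r`,
the complement Turán graph has the fewest edges: any such graph has at least
`M n r` edges. -/
theorem complement_turan_min_edges {n r : ℕ} (hr : 0 < r)
    (G : SimpleGraph (Fin n)) [DecidableRel G.Adj]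
    (hα : ∀ J : Finset (Fin n), (∀ a ∈ J, ∀ b ∈ J, ¬ G.Adj a b) → J.card ≤ r) :
    M n r ≤ G.edgeFinset.card := by
  classical
  have hcf : Gᶜ.CliqueFree (r + 1) := by
    intro s hs
    have hind : ∀ a ∈ s, ∀ b ∈ s, ¬ G.Adj a b := by
      intro a ha b hb hab
      by_cases h : a = b
      · exact G.irrefl (h ▸ hab)
      · exact ((hs.1 ha hb h).2) hab
    have h := hα s hind
    rw [hs.2] at h
    omega
  have hle : #Gᶜ.edgeFinset ≤ #(SimpleGraph.turanGraph n r).edgeFinset :=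
    (SimpleGraph.isTuranMaximal_turanGraph hr).2 hcf
  have h1 := aux_compl_card G
  have h2 := aux_compl_card (SimpleGraph.turanGraph n r)
  have h3 := aux_turan_compl_card (n := n) hr
  omega
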